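/- In a graded connected unital shuffle algebra, the left half-shuffle logarithm log^≺(1 + Y) := Y ≺ (Σ_{n≥0} (−1)^n Y^{⧢n}) is a two-sided inverse of the left half-shuffle exponential: log^≺(exp^≺(a)) = a for all a of positive degree, and exp^≺(log^≺(1 + Y)) = 1 + Y for all Y of positive degree. -/

import Mathlib

/-- A shuffle (dendriform) algebra over a field `k`: a `k`-vector space `D` with two
bilinear half-shuffle products `≺` (`prec`) and `≻` (`succ`) satisfying
`(a ≺ b) ≺ c = a ≺ (b ⧢ c)`, `(a ≻ b) ≺ c = a ≻ (b ≺ c)`, `a ≻ (b ≻ c) = (a ⧢ b) ≻ c`,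
where `a ⧢ b := a ≺ b + a ≻ b`. -/
class ShuffleAlgebra (k : Type*) (D : Type*) [Field k] [AddCommGroup D] [Module k D] where
  prec : D →ₗ[k] D →ₗ[k] D
  succ : D →ₗ[k] D →ₗ[k] D
  prec_prec : ∀ a b c : D, prec (prec a b) c = prec a (prec b c + succ b c)
  succ_prec : ∀ a b c : D, prec (succ a b) c = succ a (prec b c)
  succ_succ : ∀ a b c : D, succ a (succ b c) = succ (prec a b + succ a b) c

variable (k : Type*) {D : Type*} [Field k] [AddCommGroup D] [Module k D] [ShuffleAlgebra k D]

/-- The left half-shuffle product `a ≺ b`. -/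
def hsPrec (a b : D) : D := ShuffleAlgebra.prec (k := k) a b

/-- The right half-shuffle product `a ≻ b`. -/
def hsSucc (a b : D) : D := ShuffleAlgebra.succ (k := k) a b

/-- The shuffle product `a ⧢ b := a ≺ b + a ≻ b`. -/
def hsShuffle (a b : D) : D := hsPrec k a b + hsSucc k a b

/-!
Formal-series model of a graded connected unital shuffle algebra (cf. the paper, which
works "with formal series expansions ... insuring convergence in the formal sense"):
the positive-degree part is the space `ℕ → D` of formal series
`x = Σ_{n ≥ 0} xₙ t^{n+1}` with coefficients in a shuffle algebra `D` (the coefficient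
`x n` sits in degree `n + 1`, so there is no degree-zero component), and the unital
augmentation is `k × (ℕ → D) = k·1 ⊕ (ℕ → D)`, with the unit conventions
`a ≺ 1 = a = 1 ≻ a`, `1 ≺ a = 0 = a ≻ 1`, `1 ⧢ 1 = 1`.
All infinite sums are finite in each degree.
-/

/-- `≺` on positive-degree formal series. -/
def cprec (x y : ℕ → D) : ℕ → D := fun n =>
  match n with
  | 0 => 0
  | n + 1 => ∑ p ∈ Finset.HasAntidiagonal.antidiagonal n, hsPrec k (x p.1) (y p.2)

/-- `≻` on positive-degree formal series. -/
def csucc (x y : ℕ → D) : ℕ → D := fun n =>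
  match n with
  | 0 => 0
  | n + 1 => ∑ p ∈ Finset.HasAntidiagonal.antidiagonal n, hsSucc k (x p.1) (y p.2)

/-- `⧢` on positive-degree formal series. -/
def csh (x y : ℕ → D) : ℕ → D := cprec k x y + csucc k x y

/-- The unit `1` of the unital augmentation `k·1 ⊕ (ℕ → D)`. -/
def uone : k × (ℕ → D) := (1, 0)

/-- The inclusion of the positive-degree part into the unital augmentation. -/
def uinj (a : ℕ → D) : k × (ℕ → D) := (0, a)

/-- The shuffle product `⧢` on the unital augmentation (using `1 ⧢ X = X = X ⧢ 1`). -/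
def ush (X Y : k × (ℕ → D)) : k × (ℕ → D) :=
  (X.1 * Y.1, X.1 • Y.2 + Y.1 • X.2 + csh k X.2 Y.2)

/-- `a ≺ X` for `a` of positive degree and `X` in the unital augmentation
(using `a ≺ 1 = a`). -/
def uprec (a : ℕ → D) (X : k × (ℕ → D)) : ℕ → D := X.1 • a + cprec k a X.2

/-- `X ≻ a` for `a` of positive degree and `X` in the unital augmentation
(using `1 ≻ a = a`). -/
def usucc (X : k × (ℕ → D)) (a : ℕ → D) : ℕ → D := X.1 • a + csucc k X.2 a

/-- `a^{≺(m+1)}`, i.e. `precPow k a m = a^{≺(m+1)}` (and `a^{≺0} = 1`). -/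
def precPow (a : ℕ → D) : ℕ → (ℕ → D)
  | 0 => a
  | m + 1 => cprec k a (precPow a m)

/-- `a^{≻(m+1)}`. -/
def succPow (a : ℕ → D) : ℕ → (ℕ → D)
  | 0 => a
  | m + 1 => csucc k (succPow a m) a

/-- `a^{⧢(m+1)}`. -/
def shPow (a : ℕ → D) : ℕ → (ℕ → D)
  | 0 => a
  | m + 1 => csh k a (shPow a m)

/-- The left half-shuffle exponential `exp^≺(a) = 1 + Σ_{n>0} a^{≺n}`
(the sum is finite in each degree). -/
def expPrec (a : ℕ → D) : k × (ℕ → D) :=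
  (1, fun n => ∑ m ∈ Finset.range (n + 1), precPow k a m n)

/-- The right half-shuffle exponential `exp^≻(a) = 1 + Σ_{n>0} a^{≻n}`. -/
def expSucc (a : ℕ → D) : k × (ℕ → D) :=
  (1, fun n => ∑ m ∈ Finset.range (n + 1), succPow k a m n)

/-- The shuffle exponential `exp^⧢(a) = 1 + Σ_{n>0} a^{⧢n}/n!`. -/
noncomputable def expSh (a : ℕ → D) : k × (ℕ → D) :=
  (1, fun n => ∑ m ∈ Finset.range (n + 1), (((m + 1).factorial : k))⁻¹ • shPow k a m n)

/-- `Σ_{n ≥ 0} (−1)^n Y^{⧢n} = 1 + Σ_{m ≥ 0} (−1)^{m+1} Y^{⧢(m+1)}`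
(the shuffle-geometric series; finite in each degree). -/
def geomSh (Y : ℕ → D) : k × (ℕ → D) :=
  (1, fun n => ∑ m ∈ Finset.range (n + 1), ((-1 : k) ^ (m + 1)) • shPow k Y m n)

/-- The left half-shuffle logarithm `log^≺(1 + Y) := Y ≺ (Σ_{n≥0} (−1)^n Y^{⧢n})`. -/
def logPrec (Y : ℕ → D) : ℕ → D := uprec k Y (geomSh k Y)

/-! ### Auxiliary lemmas -/

section Aux

open Finset

/-- Reindexing a triple convolution sum. -/
lemma conv3 {M : Type*} [AddCommMonoid M] (f : ℕ → ℕ → ℕ → M) (m : ℕ) :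
    ∑ p ∈ antidiagonal m, ∑ q ∈ antidiagonal p.1, f q.1 q.2 p.2
      = ∑ p ∈ antidiagonal m, ∑ q ∈ antidiagonal p.2, f p.1 q.1 q.2 := by
  rw [Finset.sum_sigma', Finset.sum_sigma']
  refine Finset.sum_nbij' (fun x => ⟨(x.2.1, x.2.2 + x.1.2), (x.2.2, x.1.2)⟩)
    (fun x => ⟨(x.1.1 + x.2.1, x.2.2), (x.1.1, x.2.1)⟩) ?_ ?_ ?_ ?_ ?_
  · rintro ⟨⟨p1, p2⟩, ⟨q1, q2⟩⟩ hx
    simp only [Finset.mem_sigma, Finset.HasAntidiagonal.mem_antidiagonal] at hx ⊢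
    exact ⟨by omega, trivial⟩
  · rintro ⟨⟨p1, p2⟩, ⟨q1, q2⟩⟩ hx
    simp only [Finset.mem_sigma, Finset.HasAntidiagonal.mem_antidiagonal] at hx ⊢
    exact ⟨by omega, trivial⟩
  · rintro ⟨⟨p1, p2⟩, ⟨q1, q2⟩⟩ hx
    simp only [Finset.mem_sigma, Finset.HasAntidiagonal.mem_antidiagonal] at hx
    simp only [Sigma.mk.inj_iff, Prod.mk.injEq, heq_eq_eq]
    exact ⟨⟨hx.2, trivial⟩, trivial⟩
  · rintro ⟨⟨p1, p2⟩, ⟨q1, q2⟩⟩ hx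
    simp only [Finset.mem_sigma, Finset.HasAntidiagonal.mem_antidiagonal] at hx
    simp only [Sigma.mk.inj_iff, Prod.mk.injEq, heq_eq_eq]
    exact ⟨⟨trivial, hx.2⟩, trivial⟩
  · intro x hx; rfl

variable {k}

/-! #### Bilinearity of the half-shuffles on `D` -/

lemma hsPrec_zero_left (b : D) : hsPrec k 0 b = 0 := by
  simp [hsPrec]

lemma hsPrec_zero_right (a : D) : hsPrec k a 0 = 0 := by
  simp [hsPrec]

lemma hsSucc_zero_left (b : D) : hsSucc k 0 b = 0 := by
  simp [hsSucc]

lemma hsSucc_zero_right (a : D) : hsSucc k a 0 = 0 := by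
  simp [hsSucc]

lemma hsShuffle_zero_left (b : D) : hsShuffle k 0 b = 0 := by
  simp [hsShuffle, hsPrec_zero_left, hsSucc_zero_left]

lemma hsShuffle_zero_right (a : D) : hsShuffle k a 0 = 0 := by
  simp [hsShuffle, hsPrec_zero_right, hsSucc_zero_right]

lemma hsPrec_add_left (a b c : D) : hsPrec k (a + b) c = hsPrec k a c + hsPrec k b c := by
  simp [hsPrec]

lemma hsPrec_add_right (a b c : D) : hsPrec k a (b + c) = hsPrec k a b + hsPrec k a c := by
  simp [hsPrec]

lemma hsSucc_add_left (a b c : D) : hsSucc k (a + b) c = hsSucc k a c + hsSucc k b c := by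
  simp [hsSucc]

lemma hsSucc_add_right (a b c : D) : hsSucc k a (b + c) = hsSucc k a b + hsSucc k a c := by
  simp [hsSucc]

lemma hsPrec_smul_left (c0 : k) (a b : D) : hsPrec k (c0 • a) b = c0 • hsPrec k a b := by
  simp [hsPrec]

lemma hsPrec_smul_right (c0 : k) (a b : D) : hsPrec k a (c0 • b) = c0 • hsPrec k a b := by
  simp [hsPrec]

lemma hsSucc_smul_left (c0 : k) (a b : D) : hsSucc k (c0 • a) b = c0 • hsSucc k a b := by
  simp [hsSucc]

lemma hsSucc_smul_right (c0 : k) (a b : D) : hsSucc k a (c0 • b) = c0 • hsSucc k a b := by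
  simp [hsSucc]

lemma hsPrec_sum_left {ι : Type*} (s : Finset ι) (f : ι → D) (b : D) :
    hsPrec k (∑ i ∈ s, f i) b = ∑ i ∈ s, hsPrec k (f i) b := by
  simp [hsPrec, map_sum]

lemma hsPrec_sum_right {ι : Type*} (s : Finset ι) (a : D) (f : ι → D) :
    hsPrec k a (∑ i ∈ s, f i) = ∑ i ∈ s, hsPrec k a (f i) := by
  simp [hsPrec, map_sum]

lemma hsSucc_sum_left {ι : Type*} (s : Finset ι) (f : ι → D) (b : D) :
    hsSucc k (∑ i ∈ s, f i) b = ∑ i ∈ s, hsSucc k (f i) b := by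
  simp [hsSucc, map_sum]

lemma hsSucc_sum_right {ι : Type*} (s : Finset ι) (a : D) (f : ι → D) :
    hsSucc k a (∑ i ∈ s, f i) = ∑ i ∈ s, hsSucc k a (f i) := by
  simp [hsSucc, map_sum]

/-- The shuffle-algebra axioms in `hs` notation. -/
lemma hs_prec_prec (a b c : D) :
    hsPrec k (hsPrec k a b) c = hsPrec k a (hsShuffle k b c) :=
  ShuffleAlgebra.prec_prec a b c

lemma hs_succ_prec (a b c : D) :
    hsPrec k (hsSucc k a b) c = hsSucc k a (hsPrec k b c) :=
  ShuffleAlgebra.succ_prec a b c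

lemma hs_succ_succ (a b c : D) :
    hsSucc k a (hsSucc k b c) = hsSucc k (hsShuffle k a b) c :=
  ShuffleAlgebra.succ_succ a b c

/-! #### Basic facts about `cprec`, `csucc`, `csh` -/

lemma cprec_zero_apply (x y : ℕ → D) : cprec k x y 0 = 0 := rfl

lemma csucc_zero_apply (x y : ℕ → D) : csucc k x y 0 = 0 := rfl

lemma cprec_succ_apply (x y : ℕ → D) (n : ℕ) :
    cprec k x y (n + 1) = ∑ p ∈ antidiagonal n, hsPrec k (x p.1) (y p.2) := rfl

lemma csucc_succ_apply (x y : ℕ → D) (n : ℕ) :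
    csucc k x y (n + 1) = ∑ p ∈ antidiagonal n, hsSucc k (x p.1) (y p.2) := rfl

lemma csh_zero_apply (x y : ℕ → D) : csh k x y 0 = 0 := by
  show cprec k x y 0 + csucc k x y 0 = 0
  simp [cprec_zero_apply, csucc_zero_apply]

lemma csh_succ_apply (x y : ℕ → D) (n : ℕ) :
    csh k x y (n + 1) = ∑ p ∈ antidiagonal n, hsShuffle k (x p.1) (y p.2) := by
  show cprec k x y (n + 1) + csucc k x y (n + 1) = _
  rw [cprec_succ_apply, csucc_succ_apply, ← Finset.sum_add_distrib]
  rfl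

lemma cprec_zero_right (x : ℕ → D) : cprec k x 0 = 0 := by
  funext n
  match n with
  | 0 => rfl
  | n + 1 => simp [cprec_succ_apply, hsPrec_zero_right]

lemma csucc_zero_left (y : ℕ → D) : csucc k 0 y = 0 := by
  funext n
  match n with
  | 0 => rfl
  | n + 1 => simp [csucc_succ_apply, hsSucc_zero_left]

lemma cprec_add_left (x y z : ℕ → D) :
    cprec k (x + y) z = cprec k x z + cprec k y z := by
  funext n
  match n with
  | 0 => simp [cprec_zero_apply]
  | n + 1 => simp [cprec_succ_apply, hsPrec_add_left, Finset.sum_add_distrib]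

lemma cprec_add_right (x y z : ℕ → D) :
    cprec k x (y + z) = cprec k x y + cprec k x z := by
  funext n
  match n with
  | 0 => simp [cprec_zero_apply]
  | n + 1 => simp [cprec_succ_apply, hsPrec_add_right, Finset.sum_add_distrib]

lemma csucc_add_left (x y z : ℕ → D) :
    csucc k (x + y) z = csucc k x z + csucc k y z := by
  funext n
  match n with
  | 0 => simp [csucc_zero_apply]
  | n + 1 => simp [csucc_succ_apply, hsSucc_add_left, Finset.sum_add_distrib]

lemma csucc_add_right (x y z : ℕ → D) :
    csucc k x (y + z) = csucc k x y + csucc k x z := by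
  funext n
  match n with
  | 0 => simp [csucc_zero_apply]
  | n + 1 => simp [csucc_succ_apply, hsSucc_add_right, Finset.sum_add_distrib]

lemma cprec_smul_left (c0 : k) (x y : ℕ → D) :
    cprec k (c0 • x) y = c0 • cprec k x y := by
  funext n
  match n with
  | 0 => simp [cprec_zero_apply]
  | n + 1 => simp [cprec_succ_apply, hsPrec_smul_left, Finset.smul_sum]

lemma cprec_smul_right (c0 : k) (x y : ℕ → D) :
    cprec k x (c0 • y) = c0 • cprec k x y := by
  funext n
  match n with
  | 0 => simp [cprec_zero_apply]
  | n + 1 => simp [cprec_succ_apply, hsPrec_smul_right, Finset.smul_sum]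

lemma csucc_smul_left (c0 : k) (x y : ℕ → D) :
    csucc k (c0 • x) y = c0 • csucc k x y := by
  funext n
  match n with
  | 0 => simp [csucc_zero_apply]
  | n + 1 => simp [csucc_succ_apply, hsSucc_smul_left, Finset.smul_sum]

lemma csucc_smul_right (c0 : k) (x y : ℕ → D) :
    csucc k x (c0 • y) = c0 • csucc k x y := by
  funext n
  match n with
  | 0 => simp [csucc_zero_apply]
  | n + 1 => simp [csucc_succ_apply, hsSucc_smul_right, Finset.smul_sum]

lemma cprec_sum_right {ι : Type*} (s : Finset ι) (x : ℕ → D) (f : ι → ℕ → D) :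
    cprec k x (∑ i ∈ s, f i) = ∑ i ∈ s, cprec k x (f i) := by
  classical
  induction s using Finset.induction_on with
  | empty => simp [cprec_zero_right]
  | insert _ _ h ih => rw [Finset.sum_insert h, Finset.sum_insert h, cprec_add_right, ih]

lemma csucc_sum_left {ι : Type*} (s : Finset ι) (f : ι → ℕ → D) (y : ℕ → D) :
    csucc k (∑ i ∈ s, f i) y = ∑ i ∈ s, csucc k (f i) y := by
  classical
  induction s using Finset.induction_on with
  | empty => simp [csucc_zero_left]
  | insert _ _ h ih => rw [Finset.sum_insert h, Finset.sum_insert h, csucc_add_left, ih]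

lemma csh_add_right (x y z : ℕ → D) : csh k x (y + z) = csh k x y + csh k x z := by
  show cprec k x (y + z) + csucc k x (y + z) = _
  rw [cprec_add_right, csucc_add_right]
  show _ = (cprec k x y + csucc k x y) + (cprec k x z + csucc k x z)
  abel

lemma csh_add_left (x y z : ℕ → D) : csh k (x + y) z = csh k x z + csh k y z := by
  show cprec k (x + y) z + csucc k (x + y) z = _
  rw [cprec_add_left, csucc_add_left]
  show _ = (cprec k x z + csucc k x z) + (cprec k y z + csucc k y z)
  abel

lemma csh_smul_right (c0 : k) (x y : ℕ → D) : csh k x (c0 • y) = c0 • csh k x y := by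
  show cprec k x (c0 • y) + csucc k x (c0 • y) = c0 • (cprec k x y + csucc k x y)
  rw [cprec_smul_right, csucc_smul_right, smul_add]

lemma csh_smul_left (c0 : k) (x y : ℕ → D) : csh k (c0 • x) y = c0 • csh k x y := by
  show cprec k (c0 • x) y + csucc k (c0 • x) y = c0 • (cprec k x y + csucc k x y)
  rw [cprec_smul_left, csucc_smul_left, smul_add]

lemma csh_zero_right (x : ℕ → D) : csh k x 0 = 0 := by
  have := csh_smul_right (k := k) (0 : k) x 0
  simpa using this

lemma csh_zero_left (y : ℕ → D) : csh k 0 y = 0 := by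
  have := csh_smul_left (k := k) (0 : k) 0 y
  simpa using this

lemma csh_sum_right {ι : Type*} (s : Finset ι) (x : ℕ → D) (f : ι → ℕ → D) :
    csh k x (∑ i ∈ s, f i) = ∑ i ∈ s, csh k x (f i) := by
  classical
  induction s using Finset.induction_on with
  | empty => simp [csh_zero_right]
  | insert _ _ h ih => rw [Finset.sum_insert h, Finset.sum_insert h, csh_add_right, ih]

lemma csh_sum_left {ι : Type*} (s : Finset ι) (f : ι → ℕ → D) (y : ℕ → D) :
    csh k (∑ i ∈ s, f i) y = ∑ i ∈ s, csh k (f i) y := by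
  classical
  induction s using Finset.induction_on with
  | empty => simp [csh_zero_left]
  | insert _ _ h ih => rw [Finset.sum_insert h, Finset.sum_insert h, csh_add_left, ih]

/-! #### Locality -/

lemma cprec_congr_right (x y y' : ℕ → D) (n : ℕ) (h : ∀ j < n, y j = y' j) :
    cprec k x y n = cprec k x y' n := by
  match n with
  | 0 => rfl
  | m + 1 =>
    rw [cprec_succ_apply, cprec_succ_apply]
    refine Finset.sum_congr rfl fun p hp => ?_
    rw [h p.2 (by have := Finset.HasAntidiagonal.mem_antidiagonal.mp hp; omega)]

lemma csh_congr_right (x y y' : ℕ → D) (n : ℕ) (h : ∀ j < n, y j = y' j) :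
    csh k x y n = csh k x y' n := by
  match n with
  | 0 => rfl
  | m + 1 =>
    rw [csh_succ_apply, csh_succ_apply]
    refine Finset.sum_congr rfl fun p hp => ?_
    rw [h p.2 (by have := Finset.HasAntidiagonal.mem_antidiagonal.mp hp; omega)]

lemma csh_congr_left (x x' y : ℕ → D) (n : ℕ) (h : ∀ j < n, x j = x' j) :
    csh k x y n = csh k x' y n := by
  match n with
  | 0 => rfl
  | m + 1 =>
    rw [csh_succ_apply, csh_succ_apply]
    refine Finset.sum_congr rfl fun p hp => ?_
    rw [h p.1 (by have := Finset.HasAntidiagonal.mem_antidiagonal.mp hp; omega)]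

/-! #### Series-level dendriform axioms -/

lemma cprec_cprec (a b c : ℕ → D) :
    cprec k (cprec k a b) c = cprec k a (csh k b c) := by
  funext n
  match n with
  | 0 => rfl
  | 1 =>
    simp [cprec_succ_apply, Finset.Nat.antidiagonal_zero, cprec_zero_apply,
      csh_zero_apply, hsPrec_zero_left, hsPrec_zero_right]
  | m + 2 =>
    rw [cprec_succ_apply, cprec_succ_apply]
    rw [Finset.Nat.sum_antidiagonal_succ
        (f := fun p => hsPrec k (cprec k a b p.1) (c p.2)),
      Finset.Nat.sum_antidiagonal_succ'
        (f := fun p => hsPrec k (a p.1) (csh k b c p.2))]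
    simp only [cprec_zero_apply, hsPrec_zero_left, csh_zero_apply, hsPrec_zero_right,
      zero_add, cprec_succ_apply, csh_succ_apply, hsPrec_sum_left, hsPrec_sum_right]
    simp only [hs_prec_prec]
    exact conv3 (fun r s t => hsPrec k (a r) (hsShuffle k (b s) (c t))) m

lemma cprec_csucc (a b c : ℕ → D) :
    cprec k (csucc k a b) c = csucc k a (cprec k b c) := by
  funext n
  match n with
  | 0 => rfl
  | 1 =>
    simp [cprec_succ_apply, csucc_succ_apply, Finset.Nat.antidiagonal_zero,
      csucc_zero_apply, cprec_zero_apply, hsPrec_zero_left, hsSucc_zero_right]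
  | m + 2 =>
    rw [cprec_succ_apply, csucc_succ_apply]
    rw [Finset.Nat.sum_antidiagonal_succ
        (f := fun p => hsPrec k (csucc k a b p.1) (c p.2)),
      Finset.Nat.sum_antidiagonal_succ'
        (f := fun p => hsSucc k (a p.1) (cprec k b c p.2))]
    simp only [csucc_zero_apply, hsPrec_zero_left, cprec_zero_apply, hsSucc_zero_right,
      zero_add, csucc_succ_apply, cprec_succ_apply, hsPrec_sum_left, hsSucc_sum_right]
    simp only [hs_succ_prec]
    exact conv3 (fun r s t => hsSucc k (a r) (hsPrec k (b s) (c t))) m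

lemma csucc_csucc (a b c : ℕ → D) :
    csucc k a (csucc k b c) = csucc k (csh k a b) c := by
  funext n
  match n with
  | 0 => rfl
  | 1 =>
    simp [csucc_succ_apply, Finset.Nat.antidiagonal_zero, csucc_zero_apply,
      csh_zero_apply, hsSucc_zero_left, hsSucc_zero_right]
  | m + 2 =>
    rw [csucc_succ_apply, csucc_succ_apply]
    rw [Finset.Nat.sum_antidiagonal_succ'
        (f := fun p => hsSucc k (a p.1) (csucc k b c p.2)),
      Finset.Nat.sum_antidiagonal_succ
        (f := fun p => hsSucc k (csh k a b p.1) (c p.2))]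
    simp only [csucc_zero_apply, hsSucc_zero_right, csh_zero_apply, hsSucc_zero_left,
      zero_add, csucc_succ_apply, csh_succ_apply, hsSucc_sum_left, hsSucc_sum_right]
    simp only [hs_succ_succ]
    exact (conv3 (fun r s t => hsSucc k (hsShuffle k (a r) (b s)) (c t)) m).symm

lemma csh_assoc (a b c : ℕ → D) :
    csh k (csh k a b) c = csh k a (csh k b c) := by
  show cprec k (csh k a b) c + csucc k (csh k a b) c
      = cprec k a (csh k b c) + csucc k a (cprec k b c + csucc k b c)
  have h1 : cprec k (csh k a b) c
      = cprec k (cprec k a b) c + cprec k (csucc k a b) c := by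
    show cprec k (cprec k a b + csucc k a b) c = _
    rw [cprec_add_left]
  rw [h1, cprec_cprec, cprec_csucc, ← csucc_csucc, csucc_add_right]
  abel

end Aux

section Main

open Finset

variable {k}

/-! #### Grading / vanishing lemmas -/

lemma shPow_eq_zero (Y : ℕ → D) (m n : ℕ) (h : n < m) : shPow k Y m n = 0 := by
  induction m generalizing n with
  | zero => omega
  | succ m ih =>
    match n with
    | 0 => exact csh_zero_apply Y (shPow k Y m)
    | j + 1 =>
      show csh k Y (shPow k Y m) (j + 1) = 0
      rw [csh_succ_apply]
      refine Finset.sum_eq_zero fun p hp => ?_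
      rw [ih p.2 (by have := Finset.HasAntidiagonal.mem_antidiagonal.mp hp; omega), hsShuffle_zero_right]

lemma precPow_eq_zero (a : ℕ → D) (m n : ℕ) (h : n < m) : precPow k a m n = 0 := by
  induction m generalizing n with
  | zero => omega
  | succ m ih =>
    match n with
    | 0 => exact cprec_zero_apply a (precPow k a m)
    | j + 1 =>
      show cprec k a (precPow k a m) (j + 1) = 0
      rw [cprec_succ_apply]
      refine Finset.sum_eq_zero fun p hp => ?_
      rw [ih p.2 (by have := Finset.HasAntidiagonal.mem_antidiagonal.mp hp; omega), hsPrec_zero_right]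

lemma geomSh_snd_eq (Y : ℕ → D) (j N : ℕ) (h : j < N) :
    (geomSh k Y).2 j
      = (∑ m ∈ Finset.range N, ((-1 : k) ^ (m + 1)) • shPow k Y m) j := by
  simp only [geomSh, Finset.sum_apply, Pi.smul_apply]
  refine Finset.sum_subset (Finset.range_subset_range.mpr (by omega)) fun m hm hm' => ?_
  rw [shPow_eq_zero Y m j (by simp only [Finset.mem_range] at hm'; omega), smul_zero]

lemma expPrec_snd_eq (a : ℕ → D) (j N : ℕ) (h : j < N) :
    (expPrec k a).2 j = (∑ m ∈ Finset.range N, precPow k a m) j := by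
  simp only [expPrec, Finset.sum_apply]
  refine Finset.sum_subset (Finset.range_subset_range.mpr (by omega)) fun m hm hm' => ?_
  exact precPow_eq_zero a m j (by simp only [Finset.mem_range] at hm'; omega)

/-! #### The geometric series is a two-sided shuffle inverse of `1 + Y` -/

lemma shPow_comm (Y : ℕ → D) (m : ℕ) :
    csh k (shPow k Y m) Y = csh k Y (shPow k Y m) := by
  induction m with
  | zero => rfl
  | succ m ih =>
    show csh k (csh k Y (shPow k Y m)) Y = _
    rw [csh_assoc, ih]
    rfl

lemma geom_cancel_core (Y : ℕ → D) (C : ℕ → D)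
    (hC : ∀ j, C (j + 1)
      = ∑ m ∈ Finset.range (j + 1),
          (((-1 : k) ^ (m + 1)) • shPow k Y (m + 1)) (j + 1))
    (hC0 : C 0 = 0) :
    Y + (geomSh k Y).2 + C = 0 := by
  funext n
  show Y n + (geomSh k Y).2 n + C n = 0
  match n with
  | 0 =>
    have : (geomSh k Y).2 0 = -(Y 0) := by
      simp [geomSh, shPow]
    rw [this, hC0]
    abel
  | j + 1 =>
    have hG : (geomSh k Y).2 (j + 1)
        = (∑ m ∈ Finset.range (j + 1),
            -((((-1 : k) ^ (m + 1)) • shPow k Y (m + 1)) (j + 1))) - Y (j + 1) := by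
      show (∑ m ∈ Finset.range (j + 2), ((-1 : k) ^ (m + 1)) • shPow k Y m (j + 1)) = _
      rw [Finset.sum_range_succ']
      simp only [pow_succ, pow_zero, pow_one, mul_neg_one, neg_smul, neg_neg, one_smul,
        one_mul, Pi.smul_apply, sub_eq_add_neg, shPow]
    rw [hG, hC j, Finset.sum_neg_distrib]
    abel

lemma ush_one_add_geom (Y : ℕ → D) :
    ush k (uone k + uinj k Y) (geomSh k Y) = uone k := by
  have h1 : uone k + uinj k Y = ((1 : k), Y) := by
    simp [uone, uinj, Prod.ext_iff]
  rw [h1]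
  show ((1 : k) * (geomSh k Y).1,
      (1 : k) • (geomSh k Y).2 + (geomSh k Y).1 • Y + csh k Y (geomSh k Y).2) = uone k
  have hg1 : (geomSh k Y).1 = (1 : k) := rfl
  rw [hg1]
  refine Prod.ext (by simp [uone]) ?_
  show (1 : k) • (geomSh k Y).2 + (1 : k) • Y + csh k Y (geomSh k Y).2 = 0
  rw [one_smul, one_smul]
  have hC : ∀ j : ℕ, csh k Y (geomSh k Y).2 (j + 1)
      = ∑ m ∈ Finset.range (j + 1),
          (((-1 : k) ^ (m + 1)) • shPow k Y (m + 1)) (j + 1) := by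
    intro j
    rw [csh_congr_right Y (geomSh k Y).2
        (∑ m ∈ Finset.range (j + 1), ((-1 : k) ^ (m + 1)) • shPow k Y m) (j + 1)
        (fun i hi => geomSh_snd_eq Y i (j + 1) hi)]
    rw [csh_sum_right]
    simp only [csh_smul_right]
    rw [Finset.sum_apply]
    rfl
  have := geom_cancel_core Y (csh k Y (geomSh k Y).2) hC (csh_zero_apply _ _)
  calc (geomSh k Y).2 + Y + csh k Y (geomSh k Y).2
      = Y + (geomSh k Y).2 + csh k Y (geomSh k Y).2 := by abel
    _ = 0 := this

lemma ush_geom_one_add (Y : ℕ → D) :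
    ush k (geomSh k Y) (uone k + uinj k Y) = uone k := by
  have h1 : uone k + uinj k Y = ((1 : k), Y) := by
    simp [uone, uinj, Prod.ext_iff]
  rw [h1]
  show ((geomSh k Y).1 * (1 : k),
      (geomSh k Y).1 • Y + (1 : k) • (geomSh k Y).2 + csh k (geomSh k Y).2 Y) = uone k
  have hg1 : (geomSh k Y).1 = (1 : k) := rfl
  rw [hg1]
  refine Prod.ext (by simp [uone]) ?_
  show (1 : k) • Y + (1 : k) • (geomSh k Y).2 + csh k (geomSh k Y).2 Y = 0
  rw [one_smul, one_smul]
  have hC : ∀ j : ℕ, csh k (geomSh k Y).2 Y (j + 1)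
      = ∑ m ∈ Finset.range (j + 1),
          (((-1 : k) ^ (m + 1)) • shPow k Y (m + 1)) (j + 1) := by
    intro j
    rw [csh_congr_left (geomSh k Y).2
        (∑ m ∈ Finset.range (j + 1), ((-1 : k) ^ (m + 1)) • shPow k Y m) Y (j + 1)
        (fun i hi => geomSh_snd_eq Y i (j + 1) hi)]
    rw [csh_sum_left]
    simp only [csh_smul_left, shPow_comm]
    rw [Finset.sum_apply]
    rfl
  exact geom_cancel_core Y (csh k (geomSh k Y).2 Y) hC (csh_zero_apply _ _)

/-! #### The fundamental `uprec` identity -/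

lemma uprec_uprec (a : ℕ → D) (X Y : k × (ℕ → D)) :
    uprec k (uprec k a X) Y = uprec k a (ush k X Y) := by
  show Y.1 • (X.1 • a + cprec k a X.2) + cprec k (X.1 • a + cprec k a X.2) Y.2
      = (X.1 * Y.1) • a + cprec k a (X.1 • Y.2 + Y.1 • X.2 + csh k X.2 Y.2)
  rw [cprec_add_left, cprec_smul_left, cprec_cprec, cprec_add_right, cprec_add_right,
    cprec_smul_right, cprec_smul_right, smul_add, smul_smul, mul_comm Y.1 X.1]
  abel

lemma uprec_uone (a : ℕ → D) : uprec k a (uone k) = a := by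
  show (1 : k) • a + cprec k a 0 = a
  rw [one_smul, cprec_zero_right, add_zero]

/-! #### `exp^≺` as a fixed point -/

lemma expPrec_fixed (a : ℕ → D) :
    (expPrec k a).2 = uprec k a (expPrec k a) := by
  funext n
  show (expPrec k a).2 n = ((1 : k) • a + cprec k a (expPrec k a).2) n
  rw [Pi.add_apply, Pi.smul_apply, one_smul]
  match n with
  | 0 =>
    show (∑ m ∈ Finset.range 1, precPow k a m 0) = a 0 + cprec k a (expPrec k a).2 0
    simp [cprec_zero_apply, precPow]
  | j + 1 =>
    have hc : cprec k a (expPrec k a).2 (j + 1)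
        = ∑ m ∈ Finset.range (j + 1), precPow k a (m + 1) (j + 1) := by
      rw [cprec_congr_right a (expPrec k a).2
          (∑ m ∈ Finset.range (j + 1), precPow k a m) (j + 1)
          (fun i hi => expPrec_snd_eq a i (j + 1) hi)]
      rw [cprec_sum_right, Finset.sum_apply]
      rfl
    rw [hc]
    show (∑ m ∈ Finset.range (j + 2), precPow k a m (j + 1)) = _
    rw [Finset.sum_range_succ']
    show (∑ m ∈ Finset.range (j + 1), precPow k a (m + 1) (j + 1)) + precPow k a 0 (j + 1) = _
    abel

lemma fixed_unique (b x y : ℕ → D)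
    (hx : x = uprec k b (uone k + uinj k x))
    (hy : y = uprec k b (uone k + uinj k y)) : x = y := by
  have hux : ∀ z : ℕ → D, uprec k b (uone k + uinj k z) = b + cprec k b z := by
    intro z
    show ((1 : k) + 0) • b + cprec k b (0 + z) = b + cprec k b z
    rw [add_zero, one_smul, zero_add]
  rw [hux] at hx hy
  funext n
  induction n using Nat.strong_induction_on with
  | _ n ih =>
    have hxn : x n = b n + cprec k b x n := congrFun hx n
    have hyn : y n = b n + cprec k b y n := congrFun hy n
    rw [hxn, hyn, cprec_congr_right b x y n (fun j hj => ih j hj)]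

end Main

/-- in a graded connected unital shuffle algebra, the left half-shuffle
logarithm is a two-sided inverse of the left half-shuffle exponential:
`log^≺(exp^≺(a)) = a` and `exp^≺(log^≺(1 + Y)) = 1 + Y` for all `a`, `Y` of
positive degree. -/
theorem logPrec_inverse_expPrec :
    (∀ a : ℕ → D, logPrec k ((expPrec k a).2) = a) ∧
      (∀ Y : ℕ → D, expPrec k (logPrec k Y) = uone k + uinj k Y) := by
  constructor
  · intro a
    have h1 : logPrec k (expPrec k a).2
        = uprec k (uprec k a (expPrec k a)) (geomSh k (expPrec k a).2) := by
      rw [← expPrec_fixed]; rfl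
    have hE : uone k + uinj k (expPrec k a).2 = expPrec k a := by
      simp [uone, uinj, expPrec, Prod.ext_iff]
    have key := ush_one_add_geom (k := k) (Y := (expPrec k a).2)
    rw [hE] at key
    rw [h1, uprec_uprec, key, uprec_uone]
  · intro Y
    set b := logPrec k Y with hbdef
    have hb : Y = uprec k b (uone k + uinj k Y) := by
      rw [hbdef]
      show Y = uprec k (uprec k Y (geomSh k Y)) (uone k + uinj k Y)
      rw [uprec_uprec, ush_geom_one_add, uprec_uone]
    have hEb : uone k + uinj k (expPrec k b).2 = expPrec k b := by
      simp [uone, uinj, expPrec, Prod.ext_iff]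
    have hF : (expPrec k b).2 = uprec k b (uone k + uinj k (expPrec k b).2) := by
      rw [hEb]; exact expPrec_fixed b
    have huniq : (expPrec k b).2 = Y := fixed_unique b (expPrec k b).2 Y hF hb
    have : expPrec k b = uone k + uinj k Y := by
      rw [← huniq, hEb]
    exact this
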